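/- Let 𝒜 = (Q, q₀, E) be a reduced inverse automaton over Ã, let H = L(𝒜)ρ, and let T be a spanning tree of 𝒜. For each state p let u_p be the reduced word labeling the path from q₀ to p inside T, and for each transition e = (p,a,q) let b_e = (u_p a u_q⁻¹)ρ ∈ F(A). Then H is a free group with basis {b_e : e = (p,a,q) ∈ E ∖ T with a ∈ A}; in particular, the rank of H equals e − v + 1, where e is the number of transitions (p,a,q) of 𝒜 with a ∈ A and v = |Q|. -/

import Mathlib

open Function

/-- A letter of the symmetrized alphabet Ã: `(a, true)` stands for `a ∈ A` and
`(a, false)` for `a⁻¹ ∈ A⁻¹`. -/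
abbrev Ltr (A : Type) := A × Bool

/-- Inversion of letters of Ã. -/
def Ltr.inv {A : Type} (x : Ltr A) : Ltr A := (x.1, !x.2)

/-- The inverse `u⁻¹` of a word `u` over Ã. -/
def wordInv {A : Type} (w : List (Ltr A)) : List (Ltr A) := (w.map Ltr.inv).reverse

/-- A word over Ã is reduced iff it has no factor of the form `a a⁻¹` or `a⁻¹ a`. -/
def IsReducedWord {A : Type} (w : List (Ltr A)) : Prop :=
  ∀ (u v : List (Ltr A)) (a : A) (b : Bool), w ≠ u ++ (a, b) :: (a, !b) :: v

/-- An automaton over the symmetrized alphabet Ã, with a bundled state type `Q`,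
an initial state `q0` and a set `E` of transitions. -/
structure Autom (A : Type) : Type 1 where
  Q : Type
  q0 : Q
  E : Set (Q × Ltr A × Q)

namespace Autom

variable {A : Type}

/-- Paths using only transitions in the set `T`. -/
inductive PathOn (M : Autom A) (T : Set (M.Q × Ltr A × M.Q)) :
    M.Q → List (Ltr A) → M.Q → Prop
  | nil (q : M.Q) : PathOn M T q [] q
  | cons {p q r : M.Q} {a : Ltr A} {w : List (Ltr A)} :
      (p, a, q) ∈ T → PathOn M T q w r → PathOn M T p (a :: w) r

/-- `M.Path p u q` : the word `u` labels a path from state `p` to state `q` in `M`. -/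
def Path (M : Autom A) : M.Q → List (Ltr A) → M.Q → Prop := M.PathOn M.E

/-- The language L(𝒜) of words labeling a path from `q0` to `q0`. -/
def lang (M : Autom A) : Set (List (Ltr A)) := {w | M.Path M.q0 w M.q0}

/-- The set L(𝒜)ρ of reductions (in the free group `F(A)`) of words of L(𝒜). -/
def langRho (M : Autom A) : Set (FreeGroup A) := FreeGroup.mk '' M.lang

/-- Dual automaton: `(p,a,q)` is an edge iff `(q,a⁻¹,p)` is one. -/
def Dual (M : Autom A) : Prop := ∀ p a q, (p, a, q) ∈ M.E ↔ (q, Ltr.inv a, p) ∈ M.E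

/-- Deterministic automaton. -/
def Deterministic (M : Autom A) : Prop :=
  ∀ p a q q', (p, a, q) ∈ M.E → (p, a, q') ∈ M.E → q = q'

/-- Trim automaton: every state lies on a path from `q0` to `q0`. -/
def Trim (M : Autom A) : Prop := ∀ q, ∃ u v, M.Path M.q0 u q ∧ M.Path q v M.q0

/-- Inverse automaton: deterministic, trim and dual. -/
def IsInv (M : Autom A) : Prop := M.Deterministic ∧ M.Trim ∧ M.Dual

/-- Reduced automaton: every state lies on a path from `q0` to `q0` labeled by
a reduced word. -/
def IsRed (M : Autom A) : Prop :=
  ∀ q, ∃ u v, IsReducedWord (u ++ v) ∧ M.Path M.q0 u q ∧ M.Path q v M.q0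

/-- Homomorphisms of automata. -/
def IsHom (M N : Autom A) (φ : M.Q → N.Q) : Prop :=
  φ M.q0 = N.q0 ∧ ∀ p a q, (p, a, q) ∈ M.E → (φ p, a, φ q) ∈ N.E

/-- Isomorphism of automata. -/
def Isomorphic (M N : Autom A) : Prop :=
  ∃ φ : M.Q ≃ N.Q, M.IsHom N φ ∧ N.IsHom M φ.symm

/-- `N` is (isomorphic to) the automaton obtained from `M` by identifying the two
states `p` and `q`. -/
def IsIdentification (M : Autom A) (p q : M.Q) (N : Autom A) : Prop :=
  ∃ φ : M.Q → N.Q,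
    Surjective φ ∧ φ M.q0 = N.q0 ∧
    (∀ x y, φ x = φ y ↔ x = y ∨ (x = p ∧ y = q) ∨ (x = q ∧ y = p)) ∧
    (∀ e : N.Q × Ltr A × N.Q, e ∈ N.E ↔ ∃ e' ∈ M.E, e = (φ e'.1, e'.2.1, φ e'.2.2))

/-- `N` is (isomorphic to) the automaton obtained from `M` by deleting the state `q`
and all transitions involving it. -/
def IsDeletion (M : Autom A) (q : M.Q) (N : Autom A) : Prop :=
  ∃ φ : N.Q → M.Q,
    Injective φ ∧ Set.range φ = {x | x ≠ q} ∧ φ N.q0 = M.q0 ∧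
    (∀ e : N.Q × Ltr A × N.Q, e ∈ N.E ↔ (φ e.1, e.2.1, φ e.2.2) ∈ M.E)

/-- Elementary reduction of type 1. -/
def Red1 (M N : Autom A) : Prop :=
  ∃ p q r a, p ≠ q ∧ (r, a, p) ∈ M.E ∧ (r, a, q) ∈ M.E ∧ M.IsIdentification p q N

/-- Elementary reduction of type 2. -/
def Red2 (M N : Autom A) : Prop :=
  ∃ (p q : M.Q) (a : Ltr A), q ≠ M.q0 ∧ (p, a, q) ∈ M.E ∧ (q, Ltr.inv a, p) ∈ M.E ∧
    (∀ e ∈ M.E, e.1 = q ∨ e.2.2 = q → e = (p, a, q) ∨ e = (q, Ltr.inv a, p)) ∧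
    M.IsDeletion q N

/-- `N` is (isomorphic to) the reduction `Mρ` of `M`: perform elementary reductions
of type 1 until the automaton is deterministic, then elementary reductions of type 2
until none is possible. -/
def ReductionOf (M N : Autom A) : Prop :=
  ∃ M₁, Relation.ReflTransGen Red1 M M₁ ∧ M₁.Deterministic ∧
    Relation.ReflTransGen Red2 M₁ N ∧ ∀ N', ¬ Red2 N N'

/-- `N` is (isomorphic to) the expansion of `M` by `(p, w, q)`: a new path labeled `w`
from `p` to `q` (together with its inverse path) whose intermediate states are new. -/
def IsExpansion (M : Autom A) (p : M.Q) (w : List (Ltr A)) (q : M.Q) (N : Autom A) : Prop :=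
  w ≠ [] ∧
  ∃ (φ : M.Q → N.Q) (c : Fin (w.length + 1) → N.Q),
    Injective φ ∧ φ M.q0 = N.q0 ∧ c 0 = φ p ∧ c (Fin.last w.length) = φ q ∧
    (∀ i : Fin (w.length + 1), 0 < (i : ℕ) → (i : ℕ) < w.length → c i ∉ Set.range φ) ∧
    (∀ i j : Fin (w.length + 1), 0 < (i : ℕ) → (i : ℕ) < w.length → c i = c j → i = j) ∧
    (∀ x : N.Q, (∃ y, φ y = x) ∨ ∃ i, c i = x) ∧
    (∀ e : N.Q × Ltr A × N.Q, e ∈ N.E ↔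
      ((∃ e' ∈ M.E, e = (φ e'.1, e'.2.1, φ e'.2.2)) ∨
        ∃ i : Fin w.length,
          e = (c i.castSucc, w.get i, c i.succ) ∨
          e = (c i.succ, Ltr.inv (w.get i), c i.castSucc)))

/-- `M →exp^{(p,w,q)} N` : `N` is (isomorphic to) the reduction of the expansion
of `M` by `(p,w,q)`. -/
def ExpStep (M : Autom A) (p : M.Q) (w : List (Ltr A)) (q : M.Q) (N : Autom A) : Prop :=
  ∃ N' N'', M.IsExpansion p w q N' ∧ ReductionOf N' N'' ∧ Isomorphic N'' N

/-- `M →re^{(p,w,q)} N` : a reduced expansion, i.e. an expansion-then-reduction in which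
`M` embeds in `N`. -/
def REStep (M : Autom A) (p : M.Q) (w : List (Ltr A)) (q : M.Q) (N : Autom A) : Prop :=
  M.ExpStep p w q N ∧ ∃ ψ : M.Q → N.Q, Injective ψ ∧ M.IsHom N ψ

/-- `M →e^{w} N` : an e-step, i.e. `M →exp^{(q0,w,q0)} N`. -/
def EStep (M : Autom A) (w : List (Ltr A)) (N : Autom A) : Prop :=
  M.ExpStep M.q0 w M.q0 N

/-- `M →i^{p=q} N` : an i-step; `N` is (isomorphic to) the reduction of the automaton
obtained from `M` by identifying the distinct states `p` and `q`. -/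
def IStep (M : Autom A) (p q : M.Q) (N : Autom A) : Prop :=
  p ≠ q ∧ ∃ N' N'', M.IsIdentification p q N' ∧ ReductionOf N' N'' ∧ Isomorphic N'' N

/-- i-step, allowing `p = q` (in which case nothing happens). -/
def IStep' (M : Autom A) (p q : M.Q) (N : Autom A) : Prop :=
  (p = q ∧ M.Isomorphic N) ∨ M.IStep p q N

/-- `M →i N` : some i-step applies. -/
def IStepAny (M N : Autom A) : Prop := ∃ p q, M.IStep p q N

/-- Some reduced expansion (by a nonempty reduced word) applies. -/
def REStepAny (M N : Autom A) : Prop :=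
  ∃ p w q, IsReducedWord w ∧ M.REStep p w q N

/-- `M` is (isomorphic to) `Γ_A(H)` : a reduced inverse automaton with `L(M)ρ = H`. -/
def Represents (M : Autom A) (H : Subgroup (FreeGroup A)) : Prop :=
  M.IsInv ∧ M.IsRed ∧ M.langRho = ↑H

/-- The `q0`-diameter of an automaton: the maximum over all states `q` of the minimal
length of a reduced word labeling a path from `q0` to `q`. -/
noncomputable def diam (M : Autom A) : ℕ :=
  ⨆ q : M.Q, sInf {n | ∃ u, IsReducedWord u ∧ u.length = n ∧ M.Path M.q0 u q}

end Autom

/-- `S` is a basis of the subgroup `H`: `S` generates `H` and freely so. -/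
def IsFreeBasis {G : Type} [Group G] (S : Set G) (H : Subgroup G) : Prop :=
  Subgroup.closure S = H ∧
    Injective (FreeGroup.lift (Subtype.val : S → G) : FreeGroup S →* G)

/-- `H ≤ff K` : `H` is a free factor of `K`. -/
def FreeFactor {G : Type} [Group G] (H K : Subgroup G) : Prop :=
  ∃ B C : Set G, IsFreeBasis B H ∧ IsFreeBasis C K ∧ B ⊆ C

/-- The rank of a subgroup: the cardinality of a basis (the common value of
the cardinalities of all bases, when `H` is a finite-rank free group). -/
noncomputable def rk {G : Type} [Group G] (H : Subgroup G) : ℕ :=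
  sInf {n | ∃ S : Set G, IsFreeBasis S H ∧ S.ncard = n}

/-- `L` is a graphical free factor of `K` with respect to `A`: `Γ_A(L)` embeds
in `Γ_A(K)`. -/
def GraphicalFF {A : Type} (L K : Subgroup (FreeGroup A)) : Prop :=
  L ≤ K ∧ ∃ ML MK : Autom A, ML.Represents L ∧ MK.Represents K ∧
    ∃ ψ : ML.Q → MK.Q, Injective ψ ∧ ML.IsHom MK ψ

/-- A step (i-step or reduced expansion) from `M` to `N` of cost `c`. -/
def StepCost {A : Type} (M N : Autom A) (c : ℕ) : Prop :=
  (c = 0 ∧ Autom.IStepAny M N) ∨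
  (∃ p w q, IsReducedWord w ∧ w.length = c ∧ M.REStep p w q N)

/-- The well-order `≺` on cost sequences. -/
def costLT (k l : List ℕ) : Prop :=
  k.length < l.length ∨
  (k.length = l.length ∧ k.sum < l.sum) ∨
  (k.length = l.length ∧ k.sum = l.sum ∧ List.Lex (· < ·) k l)

section WordLemmas
variable {A : Type}

@[simp] lemma Ltr.inv_inv (x : Ltr A) : x.inv.inv = x := by
  cases x with | mk a b => simp [Ltr.inv]

lemma Ltr.inv_injective : Function.Injective (Ltr.inv (A := A)) := by
  intro x y h; have := congrArg Ltr.inv h; simpa using this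

@[simp] lemma wordInv_nil : wordInv ([] : List (Ltr A)) = [] := rfl

lemma wordInv_append (x y : List (Ltr A)) : wordInv (x ++ y) = wordInv y ++ wordInv x := by
  simp [wordInv]

@[simp] lemma wordInv_wordInv (w : List (Ltr A)) : wordInv (wordInv w) = w := by
  simp [wordInv, List.map_reverse, Function.comp_def]

lemma wordInv_injective : Function.Injective (wordInv (A := A)) := by
  intro x y h; have := congrArg wordInv h; simpa using this

lemma wordInv_singleton (x : Ltr A) : wordInv [x] = [Ltr.inv x] := rfl

lemma wordInv_cons (x : Ltr A) (l : List (Ltr A)) :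
    wordInv (x :: l) = wordInv l ++ [Ltr.inv x] := by simp [wordInv]

lemma wordInv_eq_invRev (w : List (Ltr A)) : wordInv w = FreeGroup.invRev w := by
  simp [wordInv, FreeGroup.invRev, Ltr.inv]

lemma mk_wordInv (w : List (Ltr A)) : FreeGroup.mk (wordInv w) = (FreeGroup.mk w)⁻¹ := by
  rw [FreeGroup.inv_mk, wordInv_eq_invRev]

@[simp] lemma length_wordInv (w : List (Ltr A)) : (wordInv w).length = w.length := by
  simp [wordInv]

lemma head?_wordInv (w : List (Ltr A)) : (wordInv w).head? = w.getLast?.map Ltr.inv := by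
  simp [wordInv, List.head?_reverse, List.getLast?_map]

lemma getLast?_wordInv (w : List (Ltr A)) : (wordInv w).getLast? = w.head?.map Ltr.inv := by
  simp [wordInv, List.getLast?_reverse, List.head?_map]

/-- index characterization of reducedness -/
lemma red_iff {w : List (Ltr A)} :
    IsReducedWord w ↔ ∀ i x, w[i]? = some x → w[i+1]? ≠ some (Ltr.inv x) := by
  constructor
  · intro h i x hx hx'
    have hi : i < w.length := by
      by_contra hc; simp [List.getElem?_eq_none (le_of_not_gt hc)] at hx
    have hi' : i + 1 < w.length := by
      by_contra hc; simp [List.getElem?_eq_none (le_of_not_gt hc)] at hx'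
    have e1 : w = w.take i ++ w.drop i := (List.take_append_drop i w).symm
    have e2 : w.drop i = x :: w.drop (i+1) := by
      have h2 := List.getElem_cons_drop hi
      rw [List.getElem?_eq_getElem hi] at hx
      simp only [Option.some.injEq] at hx
      rw [← h2, hx]
    have e3 : w.drop (i+1) = Ltr.inv x :: w.drop (i+2) := by
      have h3 := List.getElem_cons_drop hi'
      rw [List.getElem?_eq_getElem hi'] at hx'
      simp only [Option.some.injEq] at hx'
      rw [← h3, hx']
    refine h (w.take i) (w.drop (i+2)) x.1 x.2 ?_
    conv_lhs => rw [e1, e2, e3]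
    rfl
  · intro h u v a b heq
    have h1 : w[u.length]? = some (a, b) := by
      rw [heq, List.getElem?_append_right (le_refl _)]
      simp
    have h2 : w[u.length + 1]? = some (a, !b) := by
      rw [heq, List.getElem?_append_right (by omega)]
      simp
    exact h u.length (a, b) h1 (by rw [h2]; rfl)

lemma IsReducedWord.nil : IsReducedWord ([] : List (Ltr A)) := by
  rw [red_iff]; intro i x hx; simp at hx

lemma IsReducedWord.prefix {x y : List (Ltr A)} (h : IsReducedWord (x ++ y)) :
    IsReducedWord x := by
  rw [red_iff] at h ⊢
  intro i a ha ha'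
  have hi : i + 1 < x.length := by
    by_contra hc; simp [List.getElem?_eq_none (le_of_not_gt hc)] at ha'
  exact h i a (by rw [List.getElem?_append_left (by omega)]; exact ha)
    (by rw [List.getElem?_append_left hi]; exact ha')

lemma IsReducedWord.suffix {x y : List (Ltr A)} (h : IsReducedWord (x ++ y)) :
    IsReducedWord y := by
  rw [red_iff] at h ⊢
  intro i a ha ha'
  refine h (x.length + i) a ?_ ?_
  · rw [List.getElem?_append_right (by omega)]; simpa using ha
  · rw [List.getElem?_append_right (by omega)]
    have : x.length + i + 1 - x.length = i + 1 := by omega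
    rw [this]; exact ha'

/-- concatenation of reduced words with a good junction is reduced -/
lemma IsReducedWord.append {x y : List (Ltr A)} (hx : IsReducedWord x) (hy : IsReducedWord y)
    (hj : ∀ l, x.getLast? = some l → y.head? ≠ some (Ltr.inv l)) :
    IsReducedWord (x ++ y) := by
  rw [red_iff] at hx hy ⊢
  intro i a ha ha'
  rcases lt_trichotomy (i+1) x.length with h | h | h
  · exact hx i a (by rw [List.getElem?_append_left (by omega)] at ha; exact ha)
      (by rw [List.getElem?_append_left h] at ha'; exact ha')
  · -- junction
    have hxi : x[i]? = some a := by
      rw [List.getElem?_append_left (by omega)] at ha; exact ha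
    have hyl : y[0]? = some (Ltr.inv a) := by
      rw [List.getElem?_append_right (by omega)] at ha'
      simpa [h] using ha'
    have hlast : x.getLast? = some a := by
      rw [List.getLast?_eq_getElem?]
      have : x.length - 1 = i := by omega
      rw [this]; exact hxi
    have hhead : y.head? = some (Ltr.inv a) := by
      rw [List.head?_eq_getElem?]; exact hyl
    exact hj a hlast hhead
  · have hi : x.length ≤ i := by omega
    refine hy (i - x.length) a ?_ ?_
    · rw [List.getElem?_append_right hi] at ha; exact ha
    · rw [List.getElem?_append_right (by omega)] at ha'
      have : i + 1 - x.length = i - x.length + 1 := by omega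
      rw [this] at ha'; exact ha'

lemma IsReducedWord.wordInv {w : List (Ltr A)} (h : IsReducedWord w) :
    IsReducedWord (wordInv w) := by
  intro u v a b heq
  have hw : w = _root_.wordInv v ++ (a, b) :: (a, !b) :: _root_.wordInv u := by
    have h2 := congrArg _root_.wordInv heq
    rw [wordInv_wordInv] at h2
    rw [h2, wordInv_append, wordInv_cons, wordInv_cons]
    cases b <;> simp [Ltr.inv]
  exact h (_root_.wordInv v) (_root_.wordInv u) a b hw

lemma isReducedWord_reduce [DecidableEq A] (w : List (Ltr A)) :
    IsReducedWord (FreeGroup.reduce w) := by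
  intro u v a b heq
  exact FreeGroup.reduce.not heq

lemma IsReducedWord.reduce_eq [DecidableEq A] {w : List (Ltr A)} (h : IsReducedWord w) :
    FreeGroup.reduce w = w := by
  have hred : FreeGroup.Red w (FreeGroup.reduce w) := FreeGroup.reduce.red
  rcases Relation.ReflTransGen.cases_head hred with heq | ⟨c, hstep, _⟩
  · exact heq.symm
  · exfalso; cases hstep with
    | @not L₁ L₂ x b => exact h L₁ L₂ x b rfl

lemma IsReducedWord.mk_inj [DecidableEq A] {w w' : List (Ltr A)} (h : IsReducedWord w)
    (h' : IsReducedWord w') (heq : FreeGroup.mk w = FreeGroup.mk w') : w = w' := by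
  have hs := FreeGroup.reduce.sound heq
  rwa [h.reduce_eq, h'.reduce_eq] at hs

lemma IsReducedWord.mk_ne_one [DecidableEq A] {w : List (Ltr A)} (h : IsReducedWord w)
    (hne : w ≠ []) : FreeGroup.mk w ≠ 1 := by
  intro hc
  exact hne (h.mk_inj IsReducedWord.nil (by rw [hc, FreeGroup.one_eq_mk]))

/-- longest common prefix decomposition -/
lemma exists_common_prefix (x y : List (Ltr A)) :
    ∃ c s t, x = c ++ s ∧ y = c ++ t ∧ ∀ a, s.head? = some a → t.head? ≠ some a := by
  induction x generalizing y with
  | nil => exact ⟨[], [], y, rfl, rfl, by simp⟩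
  | cons hd tl ih =>
    cases y with
    | nil => exact ⟨[], hd :: tl, [], rfl, rfl, by simp⟩
    | cons hd' tl' =>
      by_cases hh : hd = hd'
      · subst hh
        obtain ⟨c, s, t, h1, h2, h3⟩ := ih tl'
        exact ⟨hd :: c, s, t, by simp [h1], by simp [h2], h3⟩
      · exact ⟨[], hd :: tl, hd' :: tl', rfl, rfl, by
          intro a ha hb; simp at ha hb; exact hh (ha.trans hb.symm)⟩

end WordLemmas


section PathLemmas
variable {A : Type} {M : Autom A} {S S' : Set (M.Q × Ltr A × M.Q)}

lemma pathOn_append {p q r : M.Q} {x y : List (Ltr A)}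
    (h1 : M.PathOn S p x q) (h2 : M.PathOn S q y r) : M.PathOn S p (x ++ y) r := by
  induction h1 with
  | nil => exact h2
  | cons he _ ih => exact Autom.PathOn.cons he (ih h2)

lemma pathOn_split {p r : M.Q} {x y : List (Ltr A)}
    (h : M.PathOn S p (x ++ y) r) : ∃ q, M.PathOn S p x q ∧ M.PathOn S q y r := by
  induction x generalizing p with
  | nil => exact ⟨p, Autom.PathOn.nil p, h⟩
  | cons a l ih =>
    cases h with
    | cons he hrest =>
      obtain ⟨q, hq1, hq2⟩ := ih hrest
      exact ⟨q, Autom.PathOn.cons he hq1, hq2⟩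

lemma pathOn_mono (hSS : S ⊆ S') {p q : M.Q} {w : List (Ltr A)}
    (h : M.PathOn S p w q) : M.PathOn S' p w q := by
  induction h with
  | nil => exact Autom.PathOn.nil _
  | cons he _ ih => exact Autom.PathOn.cons (hSS he) ih

lemma pathOn_single {p q : M.Q} {a : Ltr A} (h : (p, a, q) ∈ S) : M.PathOn S p [a] q :=
  Autom.PathOn.cons h (Autom.PathOn.nil q)

lemma pathOn_single_elim {p q : M.Q} {a : Ltr A} (h : M.PathOn S p [a] q) : (p, a, q) ∈ S := by
  cases h with
  | cons he hrest => cases hrest; exact he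

lemma pathOn_reverse (hS : ∀ p a q, (p, a, q) ∈ S → (q, Ltr.inv a, p) ∈ S)
    {p q : M.Q} {w : List (Ltr A)} (h : M.PathOn S p w q) :
    M.PathOn S q (wordInv w) p := by
  induction h with
  | nil => exact Autom.PathOn.nil _
  | @cons p' q' r' a w' he _ ih =>
    rw [wordInv_cons]
    exact pathOn_append ih (pathOn_single (hS _ _ _ he))

lemma pathOn_det (hdet : M.Deterministic) (hS : S ⊆ M.E) (hS' : S' ⊆ M.E)
    {p q q' : M.Q} {w : List (Ltr A)}
    (h : M.PathOn S p w q) (h' : M.PathOn S' p w q') : q = q' := by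
  induction w generalizing p with
  | nil => cases h; cases h'; rfl
  | cons a l ih =>
    cases h with
    | cons he hrest =>
      cases h' with
      | cons he' hrest' =>
        have := hdet _ _ _ _ (hS he) (hS' he')
        subst this
        exact ih hrest hrest'

lemma pathOn_fold (hdet : M.Deterministic) (hS : S ⊆ M.E)
    (hSinv : ∀ p a q, (p, a, q) ∈ S → (q, Ltr.inv a, p) ∈ S)
    {p q : M.Q} {w w' : List (Ltr A)}
    (h : M.PathOn S p w q) (hstep : FreeGroup.Red.Step w w') : M.PathOn S p w' q := by
  cases hstep with
  | @not L₁ L₂ x b =>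
    obtain ⟨r, h1, h2⟩ := pathOn_split h
    cases h2 with
    | cons he hrest =>
      cases hrest with
      | cons he' hrest' =>
        -- he : (r, (x,b), s) ∈ S, he' : (s, (x,!b), t) ∈ S
        have hdual : _ ∈ S := hSinv _ _ _ he
        have : _ = _ := hdet _ _ _ _ (hS he') (hS hdual)
        subst this
        exact pathOn_append h1 hrest'

lemma pathOn_reduce [DecidableEq A] (hdet : M.Deterministic) (hS : S ⊆ M.E)
    (hSinv : ∀ p a q, (p, a, q) ∈ S → (q, Ltr.inv a, p) ∈ S)
    {p q : M.Q} {w : List (Ltr A)}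
    (h : M.PathOn S p w q) : M.PathOn S p (FreeGroup.reduce w) q := by
  suffices haux : ∀ w w' : List (Ltr A), FreeGroup.Red w w' → M.PathOn S p w q →
      M.PathOn S p w' q from haux w _ FreeGroup.reduce.red h
  intro w w' hred
  induction hred with
  | refl => exact id
  | tail _ hstep ih => exact fun h0 => pathOn_fold hdet hS hSinv (ih h0) hstep

end PathLemmas

section GraphLemmas
open SimpleGraph
variable {V : Type} {G : SimpleGraph V}

lemma path_loop_nil {a : V} {p : G.Walk a a} (hp : p.IsPath) : p = SimpleGraph.Walk.nil :=
  SimpleGraph.Walk.isPath_iff_eq_nil.mp hp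

lemma path_not_rev_edge {c a : V} {p : G.Walk c a} (hp : p.IsPath) (hl : 2 ≤ p.length) :
    s(a, c) ∉ p.edges := by
  intro hmem
  cases p with
  | nil => simp at hl
  | @cons _ d _ h₂ p₂ =>
    rw [SimpleGraph.Walk.edges_cons, List.mem_cons] at hmem
    have hsup : (SimpleGraph.Walk.cons h₂ p₂).support = c :: p₂.support :=
      SimpleGraph.Walk.support_cons _ _
    have hnodup := hp.support_nodup
    rw [hsup, List.nodup_cons] at hnodup
    rcases hmem with heq | hmem
    · rw [Sym2.eq_iff] at heq
      rcases heq with ⟨hac, hcd⟩ | ⟨had, -⟩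
      · subst hac; rw [← hcd] at h₂; exact G.irrefl h₂
      · subst had
        have hp₂ : p₂.IsPath := hp.of_cons
        have := path_loop_nil hp₂
        subst this
        simp at hl
    · exact hnodup.1 (p₂.snd_mem_support_of_mem_edges hmem)

/-- a walk with no immediate return (support has no `x, y, x` pattern) in an acyclic
graph is a path -/
lemma walk_isPath_of_noRet [DecidableEq V] (hG : G.IsAcyclic) {a b : V} (w : G.Walk a b)
    (hnr : ∀ i x, w.support[i]? = some x → w.support[i+2]? ≠ some x) : w.IsPath := by
  induction w with
  | nil => simp
  | @cons a c b h w ih =>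
    have hsup : (SimpleGraph.Walk.cons h w).support = a :: w.support :=
      SimpleGraph.Walk.support_cons _ _
    have hnr' : ∀ i x, w.support[i]? = some x → w.support[i+2]? ≠ some x := by
      intro i x h1 h2
      exact hnr (i+1) x (by rw [hsup, List.getElem?_cons_succ]; exact h1)
        (by rw [hsup, List.getElem?_cons_succ]; exact h2)
    have hwpath : w.IsPath := ih hnr'
    by_cases hmem : a ∈ w.support
    · exfalso
      set w'' := w.takeUntil a hmem with hw''
      have hp'' : w''.IsPath := hwpath.takeUntil hmem
      -- support of w starts with support of w''
      have hspec := w.take_spec hmem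
      have hsupport_last : ∀ (x y : V) (p : G.Walk x y), p.support.getLast? = some y := by
        intro x y p
        rw [List.getLast?_eq_getLast (by simp), p.getLast_support]
      have hsupw : w.support = w''.support ++ (w.dropUntil a hmem).support.tail := by
        conv_lhs => rw [← hspec]
        rw [SimpleGraph.Walk.support_append]
      rcases Nat.lt_or_ge w''.length 2 with hlen | hlen
      · -- length 0 or 1
        interval_cases hl : w''.length
        · -- length 0 : c = a
          have h2 : w''.support.length = 1 := by rw [SimpleGraph.Walk.length_support, hl]
          have ha := hsupport_last _ _ w''
          rw [List.getLast?_eq_getElem?, h2] at ha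
          have hc : w''.support[0]? = some c := by
            rw [w''.support_eq_cons]; simp
          simp only [Nat.sub_self] at ha
          rw [ha] at hc
          have : c = a := by simpa using hc.symm
          subst this
          exact G.irrefl h
        · -- length 1 : support of cons h w is a :: c :: a :: ...
          have h2 : w''.support.length = 2 := by rw [SimpleGraph.Walk.length_support, hl]
          have ha := hsupport_last _ _ w''
          rw [List.getLast?_eq_getElem?, h2] at ha
          have hwa : w.support[1]? = some a := by
            rw [hsupw, List.getElem?_append_left (by omega)]
            simpa using ha
          exact hnr 0 a (by rw [hsup]; simp)
            (by rw [hsup]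
                show (a :: w.support)[2]? = some a
                rw [List.getElem?_cons_succ]
                exact hwa)
      · -- length ≥ 2 : build a cycle
        have hcyc : (SimpleGraph.Walk.cons h w'').IsCycle := by
          rw [SimpleGraph.Walk.cons_isCycle_iff]
          exact ⟨hp'', path_not_rev_edge hp'' hlen⟩
        exact hG _ hcyc
    · exact hwpath.cons hmem
end GraphLemmas

section TreeLemmas
open SimpleGraph
variable {A : Type} {M : Autom A} {T : Set (M.Q × Ltr A × M.Q)}

lemma tree_edge_ne (hTinv : ∀ p a q, (p, a, q) ∈ T → (q, Ltr.inv a, p) ∈ T)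
    (hTsimple : ∀ p q a b, (p, a, q) ∈ T → (p, b, q) ∈ T → a = b)
    {p q : M.Q} {a : Ltr A} (h : (p, a, q) ∈ T) : p ≠ q := by
  rintro rfl
  have h2 := hTinv _ _ _ h
  have h3 := hTsimple _ _ _ _ h h2
  have := congrArg Prod.snd h3
  simp [Ltr.inv] at this

lemma exists_walk {p q : M.Q} {w : List (Ltr A)}
    (hTinv : ∀ p a q, (p, a, q) ∈ T → (q, Ltr.inv a, p) ∈ T)
    (hTsimple : ∀ p q a b, (p, a, q) ∈ T → (p, b, q) ∈ T → a = b)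
    (h : M.PathOn T p w q) :
    ∃ wk : (SimpleGraph.fromRel fun x y => ∃ a, (x, a, y) ∈ T).Walk p q,
      wk.length = w.length ∧
      ∀ i x, w[i]? = some x → ∃ y z, wk.support[i]? = some y ∧
        wk.support[i+1]? = some z ∧ (y, x, z) ∈ T := by
  induction h with
  | nil =>
    exact ⟨SimpleGraph.Walk.nil, rfl, by intro i x hx; simp at hx⟩
  | @cons p' q' r' a w' he hrest ih =>
    obtain ⟨wk, hlen, hcorr⟩ := ih
    have hadj : (SimpleGraph.fromRel fun x y => ∃ a, (x, a, y) ∈ T).Adj p' q' := by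
      rw [SimpleGraph.fromRel_adj]
      exact ⟨tree_edge_ne hTinv hTsimple he, Or.inl ⟨a, he⟩⟩
    refine ⟨SimpleGraph.Walk.cons hadj wk, by simp [hlen], ?_⟩
    intro i x hx
    have hsup : (SimpleGraph.Walk.cons hadj wk).support = p' :: wk.support :=
      SimpleGraph.Walk.support_cons _ _
    cases i with
    | zero =>
      simp only [List.getElem?_cons_zero, Option.some.injEq] at hx
      subst hx
      refine ⟨p', q', by rw [hsup]; simp, ?_, he⟩
      rw [hsup, List.getElem?_cons_succ, wk.support_eq_cons]
      simp
    | succ n =>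
      rw [List.getElem?_cons_succ] at hx
      obtain ⟨y, z, h1, h2, h3⟩ := hcorr n x hx
      exact ⟨y, z, by rw [hsup, List.getElem?_cons_succ]; exact h1,
        by rw [hsup, List.getElem?_cons_succ]; exact h2, h3⟩

lemma label_unique (hdet : M.Deterministic) (hTE : T ⊆ M.E)
    (hTinv : ∀ p a q, (p, a, q) ∈ T → (q, Ltr.inv a, p) ∈ T)
    (hTsimple : ∀ p q a b, (p, a, q) ∈ T → (p, b, q) ∈ T → a = b)
    (hTree : (SimpleGraph.fromRel fun x y => ∃ a, (x, a, y) ∈ T).IsTree)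
    {p q : M.Q} {w w' : List (Ltr A)}
    (h : M.PathOn T p w q) (h' : M.PathOn T p w' q)
    (hw : IsReducedWord w) (hw' : IsReducedWord w') : w = w' := by
  classical
  obtain ⟨wk, hlen, hcorr⟩ := exists_walk hTinv hTsimple h
  obtain ⟨wk', hlen', hcorr'⟩ := exists_walk hTinv hTsimple h'
  -- no-return for wk
  have hnr : ∀ (v : List (Ltr A)) (wkk : (SimpleGraph.fromRel
        fun x y => ∃ a, (x, a, y) ∈ T).Walk p q),
      IsReducedWord v → wkk.length = v.length →
      (∀ i x, v[i]? = some x → ∃ y z, wkk.support[i]? = some y ∧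
        wkk.support[i+1]? = some z ∧ (y, x, z) ∈ T) →
      ∀ i x, wkk.support[i]? = some x → wkk.support[i+2]? ≠ some x := by
    intro v wkk hred hl hc i x h1 h2
    have hslen : wkk.support.length = v.length + 1 := by
      rw [SimpleGraph.Walk.length_support, hl]
    have hi : i + 2 < v.length + 1 := by
      by_contra hcon
      rw [← hslen] at hcon
      simp [List.getElem?_eq_none (le_of_not_gt hcon)] at h2
    have hv1 : ∃ x1, v[i]? = some x1 := by
      have : i < v.length := by omega
      exact ⟨v[i], List.getElem?_eq_getElem this⟩
    have hv2 : ∃ x2, v[i+1]? = some x2 := by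
      have : i + 1 < v.length := by omega
      exact ⟨v[i+1], List.getElem?_eq_getElem this⟩
    obtain ⟨x1, hx1⟩ := hv1
    obtain ⟨x2, hx2⟩ := hv2
    obtain ⟨y1, z1, hy1, hz1, he1⟩ := hc i x1 hx1
    obtain ⟨y2, z2, hy2, hz2, he2⟩ := hc (i+1) x2 hx2
    rw [h1] at hy1
    have hxy : y1 = x := by simpa using hy1.symm
    rw [hz1] at hy2
    have hzz : y2 = z1 := by simpa using hy2.symm
    rw [h2] at hz2
    have hz2' : z2 = x := by simpa using hz2.symm
    rw [hxy] at he1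
    rw [hzz, hz2'] at he2
    have hdual := hTinv _ _ _ he1
    have hx12 : x2 = Ltr.inv x1 := hTsimple _ _ _ _ he2 hdual
    rw [red_iff] at hred
    exact hred i x1 hx1 (by rw [hx2, hx12])
  have hp1 : wk.IsPath := walk_isPath_of_noRet hTree.IsAcyclic wk
    (hnr w wk hw hlen hcorr)
  have hp2 : wk'.IsPath := walk_isPath_of_noRet hTree.IsAcyclic wk'
    (hnr w' wk' hw' hlen' hcorr')
  have hweq : wk = wk' := by
    have huniq := hTree.existsUnique_path p q
    obtain ⟨pp, -, huu⟩ := huniq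
    rw [huu wk hp1, huu wk' hp2]
  subst hweq
  have hlw : w.length = w'.length := by rw [← hlen, hlen']
  apply List.ext_getElem?
  intro i
  rcases Nat.lt_or_ge i w.length with hi | hi
  · obtain ⟨y, z, hy, hz, he⟩ := hcorr i w[i] (List.getElem?_eq_getElem hi)
    have hi' : i < w'.length := by omega
    obtain ⟨y', z', hy', hz', he'⟩ := hcorr' i w'[i] (List.getElem?_eq_getElem hi')
    rw [hy] at hy'
    rw [hz] at hz'
    have hyy : y' = y := by simpa using hy'.symm
    have hzz : z' = z := by simpa using hz'.symm
    subst hyy; subst hzz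
    have : w[i] = w'[i] := hTsimple _ _ _ _ he he'
    rw [List.getElem?_eq_getElem hi, List.getElem?_eq_getElem hi', this]
  · rw [List.getElem?_eq_none hi, List.getElem?_eq_none (by omega : w'.length ≤ i)]

lemma loop_reduced_nil (hdet : M.Deterministic) (hTE : T ⊆ M.E)
    (hTinv : ∀ p a q, (p, a, q) ∈ T → (q, Ltr.inv a, p) ∈ T)
    (hTsimple : ∀ p q a b, (p, a, q) ∈ T → (p, b, q) ∈ T → a = b)
    (hTree : (SimpleGraph.fromRel fun x y => ∃ a, (x, a, y) ∈ T).IsTree)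
    {p : M.Q} {w : List (Ltr A)}
    (h : M.PathOn T p w p) (hw : IsReducedWord w) : w = [] :=
  label_unique hdet hTE hTinv hTsimple hTree h (Autom.PathOn.nil p) hw IsReducedWord.nil

end TreeLemmas

lemma IsReducedWord.singleton {A : Type} (x : Ltr A) : IsReducedWord [x] := by
  rw [red_iff]; intro i a ha ha'
  cases i with
  | zero => simp at ha'
  | succ n => simp at ha

section Main
variable {A : Type} {M : Autom A} {T : Set (M.Q × Ltr A × M.Q)}

/-- tree-edge compatibility of the `u` labels -/
lemma value_edge [DecidableEq A] (hdet : M.Deterministic) (hTE : T ⊆ M.E)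
    (hTinv : ∀ p a q, (p, a, q) ∈ T → (q, Ltr.inv a, p) ∈ T)
    (hTsimple : ∀ p q a b, (p, a, q) ∈ T → (p, b, q) ∈ T → a = b)
    (hTree : (SimpleGraph.fromRel fun x y => ∃ a, (x, a, y) ∈ T).IsTree)
    (u : M.Q → List (Ltr A))
    (hu : ∀ p, IsReducedWord (u p) ∧ M.PathOn T M.q0 (u p) p)
    {p q : M.Q} {a : Ltr A} (h : (p, a, q) ∈ T) :
    FreeGroup.mk (u p ++ [a]) = FreeGroup.mk (u q) := by
  have hpath : M.PathOn T M.q0 (u p ++ [a]) q :=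
    pathOn_append (hu p).2 (pathOn_single h)
  have hred := pathOn_reduce hdet hTE hTinv hpath
  have := label_unique hdet hTE hTinv hTsimple hTree hred (hu q).2
    (isReducedWord_reduce _) (hu q).1
  rw [← this, FreeGroup.reduce.self]

lemma u_q0_nil (hdet : M.Deterministic) (hTE : T ⊆ M.E)
    (hTinv : ∀ p a q, (p, a, q) ∈ T → (q, Ltr.inv a, p) ∈ T)
    (hTsimple : ∀ p q a b, (p, a, q) ∈ T → (p, b, q) ∈ T → a = b)
    (hTree : (SimpleGraph.fromRel fun x y => ∃ a, (x, a, y) ∈ T).IsTree)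
    (u : M.Q → List (Ltr A))
    (hu : ∀ p, IsReducedWord (u p) ∧ M.PathOn T M.q0 (u p) p) :
    u M.q0 = [] :=
  loop_reduced_nil hdet hTE hTinv hTsimple hTree (hu M.q0).2 (hu M.q0).1

/-- a positively-oriented branching out of the tree path is absurd -/
lemma branch_absurd (hdet : M.Deterministic) (hTE : T ⊆ M.E)
    (u : M.Q → List (Ltr A))
    (hu : ∀ p, IsReducedWord (u p) ∧ M.PathOn T M.q0 (u p) p)
    {p p' q : M.Q} {m : Ltr A} {rest : List (Ltr A)}
    (heq : u p' = u p ++ m :: rest) (he : (p, m, q) ∈ M.E) (hT : (p, m, q) ∉ T) :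
    False := by
  have h := (hu p').2
  rw [heq] at h
  obtain ⟨r, h1, h2⟩ := pathOn_split h
  have hrp : r = p := pathOn_det hdet hTE hTE h1 (hu p).2
  subst hrp
  cases h2 with
  | cons he2 _ =>
    have := hdet _ _ _ _ he (hTE he2)
    subst this
    exact hT he2

/-- the word `u p · m · (u q)⁻¹` is reduced for a non-tree edge `(p,m,q)`. -/
lemma mid_reduced (hdet : M.Deterministic) (hdual : M.Dual) (hTE : T ⊆ M.E)
    (hTinv : ∀ p a q, (p, a, q) ∈ T → (q, Ltr.inv a, p) ∈ T)
    (u : M.Q → List (Ltr A))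
    (hu : ∀ p, IsReducedWord (u p) ∧ M.PathOn T M.q0 (u p) p)
    {p q : M.Q} {m : Ltr A} (he : (p, m, q) ∈ M.E) (hT : (p, m, q) ∉ T) :
    IsReducedWord (u p ++ m :: wordInv (u q)) := by
  have hinner : IsReducedWord ([m] ++ wordInv (u q)) := by
    refine IsReducedWord.append (IsReducedWord.singleton m) (hu q).1.wordInv ?_
    intro l hl hh
    simp at hl
    subst hl
    rw [head?_wordInv] at hh
    obtain ⟨y, hy, hy2⟩ := Option.map_eq_some_iff.mp hh
    have hym : y = m := by
      have h3 := congrArg Ltr.inv hy2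
      simpa using h3
    rw [hym] at hy
    have hne : u q ≠ [] := by intro hc; rw [hc] at hy; simp at hy
    have hsplit : u q = (u q).dropLast ++ [m] := by
      conv_lhs => rw [← List.dropLast_append_getLast hne]
      rw [List.getLast?_eq_getLast hne, Option.some.injEq] at hy
      rw [hy]
    have hpath := (hu q).2
    rw [hsplit] at hpath
    obtain ⟨r, h1, h2⟩ := pathOn_split hpath
    have he2 : (r, m, q) ∈ T := pathOn_single_elim h2
    have hd1 : (q, Ltr.inv m, r) ∈ T := hTinv _ _ _ he2
    have hd2 : (q, Ltr.inv m, p) ∈ M.E := (hdual p m q).mp he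
    have : r = p := hdet _ _ _ _ (hTE hd1) hd2
    subst this
    exact hT he2
  refine IsReducedWord.append (hu p).1 hinner ?_
  intro l hl hh
  simp only [List.singleton_append, List.head?_cons, Option.some.injEq] at hh
  -- m = Ltr.inv l, so l = Ltr.inv m
  have hlm : l = Ltr.inv m := by rw [hh]; simp
  rw [hlm] at hl
  have hne : u p ≠ [] := by intro hc; rw [hc] at hl; simp at hl
  have hsplit : u p = (u p).dropLast ++ [Ltr.inv m] := by
    conv_lhs => rw [← List.dropLast_append_getLast hne]
    rw [List.getLast?_eq_getLast hne, Option.some.injEq] at hl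
    rw [hl]
  have hpath := (hu p).2
  rw [hsplit] at hpath
  obtain ⟨r, h1, h2⟩ := pathOn_split hpath
  have he2 : (r, Ltr.inv m, p) ∈ T := pathOn_single_elim h2
  have hd1 : (p, m, r) ∈ T := by
    have := hTinv _ _ _ he2
    simpa using this
  have : r = q := hdet _ _ _ _ (hTE hd1) he
  subst this
  exact hT hd1

end Main

section Step
variable {A : Type} {M : Autom A} {T : Set (M.Q × Ltr A × M.Q)}

lemma mk_expand (X Y : List (Ltr A)) (m : Ltr A) :
    FreeGroup.mk (X ++ m :: Y) = FreeGroup.mk X * FreeGroup.mk [m] * FreeGroup.mk Y := by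
  rw [FreeGroup.mul_mk, FreeGroup.mul_mk]
  simp

/-- the key cancellation step -/
lemma cancel_step [DecidableEq A] (hdet : M.Deterministic) (hdual : M.Dual) (hTE : T ⊆ M.E)
    (hTinv : ∀ p a q, (p, a, q) ∈ T → (q, Ltr.inv a, p) ∈ T)
    (u : M.Q → List (Ltr A))
    (hu : ∀ p, IsReducedWord (u p) ∧ M.PathOn T M.q0 (u p) p)
    {p₁ q₁ p₂ q₂ : M.Q} {m₁ m₂ : Ltr A}
    (hd : (p₁, m₁, q₁) ∈ M.E) (hdT : (p₁, m₁, q₁) ∉ T)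
    (hd' : (p₂, m₂, q₂) ∈ M.E) (hd'T : (p₂, m₂, q₂) ∉ T)
    (hne : ¬(p₂ = q₁ ∧ m₂ = Ltr.inv m₁ ∧ q₂ = p₁))
    (v' : List (Ltr A)) (hv' : IsReducedWord (v' ++ m₁ :: wordInv (u q₁))) :
    ∃ v, IsReducedWord (v ++ m₂ :: wordInv (u q₂)) ∧
      FreeGroup.mk (v ++ m₂ :: wordInv (u q₂)) =
        FreeGroup.mk (v' ++ m₁ :: wordInv (u q₁)) *
        FreeGroup.mk (u p₂ ++ m₂ :: wordInv (u q₂)) := by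
  obtain ⟨c, s, t, hcs, hct, hdiv⟩ := exists_common_prefix (u q₁) (u p₂)
  -- states along the common prefix
  obtain ⟨r₁, hc₁, hs₁⟩ := pathOn_split (hcs ▸ (hu q₁).2)
  obtain ⟨r₂, hc₂, ht₂⟩ := pathOn_split (hct ▸ (hu p₂).2)
  have hrr : r₁ = r₂ := pathOn_det hdet hTE hTE hc₁ hc₂
  subst hrr
  refine ⟨v' ++ m₁ :: (wordInv s ++ t), ?_, ?_⟩
  · -- reducedness
    have htarget : (v' ++ m₁ :: (wordInv s ++ t)) ++ m₂ :: wordInv (u q₂) =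
        (v' ++ m₁ :: wordInv s) ++ (t ++ m₂ :: wordInv (u q₂)) := by simp
    rw [htarget]
    have hleft : IsReducedWord (v' ++ m₁ :: wordInv s) := by
      have h0 : v' ++ m₁ :: wordInv (u q₁) =
          (v' ++ m₁ :: wordInv s) ++ wordInv c := by
        rw [hcs, wordInv_append]; simp
      rw [h0] at hv'
      exact hv'.prefix
    have hright : IsReducedWord (t ++ m₂ :: wordInv (u q₂)) := by
      have h0 : u p₂ ++ m₂ :: wordInv (u q₂) =
          c ++ (t ++ m₂ :: wordInv (u q₂)) := by rw [hct]; simp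
      have h1 := mid_reduced hdet hdual hTE hTinv u hu hd' hd'T
      rw [h0] at h1
      exact h1.suffix
    refine IsReducedWord.append hleft hright ?_
    intro l hlast hhead
    -- case analysis on s, t
    cases s with
    | nil =>
      have hr1q1 : r₁ = q₁ := by cases hs₁; rfl
      subst hr1q1
      have hlast' : l = m₁ := by
        rw [wordInv_nil] at hlast
        rw [show v' ++ m₁ :: ([] : List (Ltr A)) = v' ++ [m₁] from rfl,
          List.getLast?_concat] at hlast
        simpa using hlast.symm
      subst hlast'
      cases t with
      | nil =>
        -- q₂ = p₁ case: contradiction with hne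
        have hr1p2 : r₁ = p₂ := by cases ht₂; rfl
        subst hr1p2
        have hhead' : m₂ = Ltr.inv l := by simpa using hhead
        have hdd : (r₁, Ltr.inv l, p₁) ∈ M.E := (hdual _ _ _).mp hd
        rw [hhead'] at hd'
        have hq2p1 : q₂ = p₁ := hdet _ _ _ _ hd' hdd
        exact hne ⟨rfl, hhead', hq2p1⟩
      | cons y t' =>
        have hhead' : y = Ltr.inv l := by simpa using hhead
        cases ht₂ with
        | @cons _ z _ _ _ he2 _ =>
          rw [hhead'] at he2
          have hdd : (r₁, Ltr.inv l, p₁) ∈ M.E := (hdual _ _ _).mp hd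
          have hzp : z = p₁ := hdet _ _ _ _ (hTE he2) hdd
          rw [hzp] at he2
          have := hTinv _ _ _ he2
          simp only [Ltr.inv_inv] at this
          exact hdT this
    | cons x s' =>
      have hlast' : l = Ltr.inv x := by
        rw [show m₁ :: wordInv (x :: s') = (m₁ :: wordInv s') ++ [Ltr.inv x] by
            rw [wordInv_cons]; simp,
          ← List.append_assoc, List.getLast?_concat] at hlast
        simpa using hlast.symm
      subst hlast'
      cases t with
      | nil =>
        have hr1p2 : r₁ = p₂ := by cases ht₂; rfl
        subst hr1p2
        -- head is m₂ ; m₂ = inv (inv x) = x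
        have hhead' : m₂ = x := by
          have h5 : m₂ = Ltr.inv (Ltr.inv x) := by simpa using hhead
          simpa using h5
        cases hs₁ with
        | @cons _ z _ _ _ he2 _ =>
          rw [← hhead'] at he2
          have hzq : z = q₂ := hdet _ _ _ _ (hTE he2) hd'
          rw [hzq] at he2
          exact hd'T he2
      | cons y t' =>
        have hhead' : y = x := by
          have h5 : y = Ltr.inv (Ltr.inv x) := by simpa using hhead
          simpa using h5
        exact hdiv x rfl (by rw [show (y :: t').head? = some y from rfl, hhead'])
  · -- the mk computation
    rw [mk_expand (v' ++ m₁ :: (wordInv s ++ t)) (wordInv (u q₂)) m₂,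
      mk_expand v' (wordInv s ++ t) m₁,
      mk_expand v' (wordInv (u q₁)) m₁,
      mk_expand (u p₂) (wordInv (u q₂)) m₂,
      hcs, hct, wordInv_append c s,
      ← FreeGroup.mul_mk, ← FreeGroup.mul_mk, ← FreeGroup.mul_mk,
      mk_wordInv s, mk_wordInv c, mk_wordInv (u q₂)]
    group

end Step


/-- Fact 1.7 (spanning tree basis): given a spanning tree `T` of a reduced inverse
automaton representing `H`, the elements `b_e = (u_p a u_q⁻¹)ρ`, for `e = (p,a,q)` a
positively labeled transition not in `T`, form a basis of `H`; in particular
`rank H = e - v + 1` (stated as `rank H + v = e + 1`). -/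
theorem spanning_tree_basis
    {A : Type} (M : Autom A) (hMinv : M.IsInv) (hMred : M.IsRed)
    (hfin : Finite M.Q) (hEfin : M.E.Finite)
    (H : Subgroup (FreeGroup A)) (hH : M.langRho = ↑H)
    (T : Set (M.Q × Ltr A × M.Q)) (hTE : T ⊆ M.E)
    (hTinv : ∀ p a q, (p, a, q) ∈ T → (q, Ltr.inv a, p) ∈ T)
    (hTsimple : ∀ p q a b, (p, a, q) ∈ T → (p, b, q) ∈ T → a = b)
    (hTree : (SimpleGraph.fromRel fun x y => ∃ a, (x, a, y) ∈ T).IsTree)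
    (u : M.Q → List (Ltr A))
    (hu : ∀ p, IsReducedWord (u p) ∧ M.PathOn T M.q0 (u p) p)
    (B : Set (FreeGroup A))
    (hB : B = {x | ∃ p, ∃ a : A, ∃ q, (p, (a, true), q) ∈ M.E ∧ (p, (a, true), q) ∉ T ∧
      x = FreeGroup.mk (u p ++ (a, true) :: wordInv (u q))}) :
    IsFreeBasis B H ∧
      B.ncard + Nat.card M.Q = {e ∈ M.E | e.2.1.2 = true}.ncard + 1 := by
  classical
  obtain ⟨hdet, -, hdual⟩ := hMinv
  have hured : ∀ p, IsReducedWord (u p) := fun p => (hu p).1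
  have hupath : ∀ p, M.PathOn T M.q0 (u p) p := fun p => (hu p).2
  have uq0 : u M.q0 = [] := u_q0_nil hdet hTE hTinv hTsimple hTree u hu
  -- the basis elements as images of non-tree positive edges
  have hBS : B = (fun e : M.Q × Ltr A × M.Q =>
      FreeGroup.mk (u e.1 ++ e.2.1 :: wordInv (u e.2.2))) ''
      {e | e ∈ M.E ∧ e ∉ T ∧ e.2.1.2 = true} := by
    rw [hB]
    ext x
    constructor
    · rintro ⟨p, a, q, h1, h2, h3⟩
      exact ⟨(p, (a, true), q), ⟨h1, h2, rfl⟩, h3.symm⟩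
    · rintro ⟨⟨p, m, q⟩, ⟨h1, h2, h3⟩, h4⟩
      refine ⟨p, m.1, q, ?_, ?_, ?_⟩
      · have : m = (m.1, true) := by
          cases m with | mk a b => simp at h3; rw [h3]
        rwa [← this]
      · have : m = (m.1, true) := by
          cases m with | mk a b => simp at h3; rw [h3]
        rwa [← this]
      · have : m = (m.1, true) := by
          cases m with | mk a b => simp at h3; rw [h3]
        rw [← h4, ← this]
  -- I. closure B = H
  have hclosure : Subgroup.closure B = H := by
    have hloop : ∀ e : M.Q × Ltr A × M.Q, e ∈ M.E →
        M.PathOn M.E M.q0 (u e.1 ++ e.2.1 :: wordInv (u e.2.2)) M.q0 := by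
      rintro ⟨p, m, q⟩ he
      refine pathOn_append (pathOn_mono hTE (hupath p)) ?_
      exact Autom.PathOn.cons he (pathOn_mono hTE (pathOn_reverse hTinv (hupath q)))
    have hmemH : ∀ e : M.Q × Ltr A × M.Q, e ∈ M.E →
        FreeGroup.mk (u e.1 ++ e.2.1 :: wordInv (u e.2.2)) ∈ H := by
      intro e he
      have hx : FreeGroup.mk (u e.1 ++ e.2.1 :: wordInv (u e.2.2)) ∈ M.langRho :=
        ⟨_, hloop e he, rfl⟩
      rwa [hH] at hx
    have hle : Subgroup.closure B ≤ H := by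
      rw [Subgroup.closure_le]
      intro x hx
      rw [hBS] at hx
      obtain ⟨e, he, rfl⟩ := hx
      exact hmemH e he.1
    have hedge : ∀ e : M.Q × Ltr A × M.Q, e ∈ M.E →
        FreeGroup.mk (u e.1 ++ e.2.1 :: wordInv (u e.2.2)) ∈ Subgroup.closure B := by
      rintro ⟨p, m, q⟩ he
      by_cases hT : (p, m, q) ∈ T
      · have hv := value_edge hdet hTE hTinv hTsimple hTree u hu hT
        have h1 : FreeGroup.mk (u p ++ m :: wordInv (u q)) = 1 := by
          rw [mk_expand, mk_wordInv, FreeGroup.mul_mk, hv]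
          exact mul_inv_cancel _
        show FreeGroup.mk (u p ++ m :: wordInv (u q)) ∈ _
        rw [h1]; exact Subgroup.one_mem _
      · rcases Bool.eq_false_or_eq_true m.2 with hm | hm
        · have hmem : FreeGroup.mk (u p ++ m :: wordInv (u q)) ∈ B := by
            rw [hBS]; exact ⟨(p, m, q), ⟨he, hT, hm⟩, rfl⟩
          exact Subgroup.subset_closure hmem
        · have hd2 : (q, Ltr.inv m, p) ∈ M.E := (hdual _ _ _).mp he
          have hd2T : (q, Ltr.inv m, p) ∉ T := by
            intro hc
            have h2 := hTinv _ _ _ hc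
            simp only [Ltr.inv_inv] at h2
            exact hT h2
          have hpos : (Ltr.inv m).2 = true := by simp [Ltr.inv, hm]
          have hmem : FreeGroup.mk (u q ++ Ltr.inv m :: wordInv (u p)) ∈ B := by
            rw [hBS]; exact ⟨(q, Ltr.inv m, p), ⟨hd2, hd2T, hpos⟩, rfl⟩
          have hinv : FreeGroup.mk (u p ++ m :: wordInv (u q)) =
              (FreeGroup.mk (u q ++ Ltr.inv m :: wordInv (u p)))⁻¹ := by
            rw [← mk_wordInv]
            congr 1
            rw [wordInv_append, wordInv_cons, wordInv_wordInv]
            simp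
          show FreeGroup.mk (u p ++ m :: wordInv (u q)) ∈ _
          rw [hinv]
          exact inv_mem (Subgroup.subset_closure hmem)
    have htel : ∀ (w : List (Ltr A)) (p q : M.Q), M.PathOn M.E p w q →
        FreeGroup.mk (u p) * FreeGroup.mk w * (FreeGroup.mk (u q))⁻¹ ∈
          Subgroup.closure B := by
      intro w p q hpath
      induction hpath with
      | nil q'' =>
        rw [← FreeGroup.one_eq_mk, mul_one, mul_inv_cancel]
        exact Subgroup.one_mem _
      | @cons p' q' r' a w' he hrest ih =>
        have h1 := hedge (p', a, q') he
        have hexp : FreeGroup.mk (u p') * FreeGroup.mk (a :: w') *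
            (FreeGroup.mk (u r'))⁻¹ =
            (FreeGroup.mk (u p' ++ a :: wordInv (u q'))) *
            (FreeGroup.mk (u q') * FreeGroup.mk w' * (FreeGroup.mk (u r'))⁻¹) := by
          rw [mk_expand, mk_wordInv, show (a :: w' : List (Ltr A)) = [a] ++ w' from rfl,
            ← FreeGroup.mul_mk]
          group
        rw [hexp]
        exact Subgroup.mul_mem _ h1 ih
    refine le_antisymm hle ?_
    intro x hx
    have hx2 : x ∈ M.langRho := by rw [hH]; exact hx
    obtain ⟨w, hw, rfl⟩ := hx2
    have h3 := htel w M.q0 M.q0 hw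
    rw [uq0, ← FreeGroup.one_eq_mk] at h3
    simpa using h3
  -- II. freeness
  have hfree : Injective (FreeGroup.lift (Subtype.val : B → FreeGroup A) :
      FreeGroup B →* FreeGroup A) := by
    -- choose a witness edge for every basis element
    have hpick : ∀ x : B, ∃ e : M.Q × Ltr A × M.Q, e ∈ M.E ∧ e ∉ T ∧ e.2.1.2 = true ∧
        (x : FreeGroup A) = FreeGroup.mk (u e.1 ++ e.2.1 :: wordInv (u e.2.2)) := by
      rintro ⟨x, hx⟩
      rw [hBS] at hx
      obtain ⟨e, he, hval⟩ := hx
      exact ⟨e, he.1, he.2.1, he.2.2, hval.symm⟩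
    choose ed hedE hedT hedpos hedval using hpick
    set dedge : ↥B × Bool → M.Q × Ltr A × M.Q := fun ℓ =>
      if ℓ.2 then ed ℓ.1 else ((ed ℓ.1).2.2, Ltr.inv (ed ℓ.1).2.1, (ed ℓ.1).1)
      with hdedge
    have heta : ∀ e : M.Q × Ltr A × M.Q, e = (e.1, e.2.1, e.2.2) := fun e => rfl
    have heta2 : ∀ ℓ : ↥B × Bool, ℓ = (ℓ.1, ℓ.2) := fun _ => rfl
    have hdpos : ∀ ℓ : ↥B × Bool, ℓ.2 = true → dedge ℓ = ed ℓ.1 := by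
      intro ℓ h; rw [hdedge]; simp [h]
    have hdneg : ∀ ℓ : ↥B × Bool, ℓ.2 = false →
        dedge ℓ = ((ed ℓ.1).2.2, Ltr.inv (ed ℓ.1).2.1, (ed ℓ.1).1) := by
      intro ℓ h; rw [hdedge]; simp [h]
    have hdE : ∀ ℓ, dedge ℓ ∈ M.E := by
      intro ℓ
      rcases Bool.eq_false_or_eq_true ℓ.2 with h | h
      · rw [hdpos ℓ h]; exact hedE ℓ.1
      · rw [hdneg ℓ h]
        exact (hdual (ed ℓ.1).1 ((ed ℓ.1).2.1) ((ed ℓ.1).2.2)).mp (hedE ℓ.1)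
    have hdT : ∀ ℓ, dedge ℓ ∉ T := by
      intro ℓ
      rcases Bool.eq_false_or_eq_true ℓ.2 with h | h
      · rw [hdpos ℓ h]; exact hedT ℓ.1
      · rw [hdneg ℓ h]
        intro hc
        have h2 := hTinv _ _ _ hc
        simp only [Ltr.inv_inv] at h2
        exact hedT ℓ.1 h2
    have hdval : ∀ ℓ, FreeGroup.mk (u (dedge ℓ).1 ++ (dedge ℓ).2.1 ::
        wordInv (u (dedge ℓ).2.2)) =
        (if ℓ.2 then (↑ℓ.1 : FreeGroup A) else (↑ℓ.1 : FreeGroup A)⁻¹) := by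
      intro ℓ
      rcases Bool.eq_false_or_eq_true ℓ.2 with h | h
      · rw [hdpos ℓ h]
        simp only [h, if_true]
        exact (hedval ℓ.1).symm
      · rw [hdneg ℓ h]
        simp only [h, Bool.false_eq_true, if_false]
        rw [hedval ℓ.1, ← mk_wordInv]
        congr 1
        rw [wordInv_append, wordInv_cons, wordInv_wordInv]
        simp
    have hddual : ∀ ℓ ℓ' : ↥B × Bool,
        dedge ℓ' = ((dedge ℓ).2.2, Ltr.inv (dedge ℓ).2.1, (dedge ℓ).1) →
        ℓ' = (ℓ.1, !ℓ.2) := by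
      intro ℓ ℓ' hc
      have hsign : ∀ ℓ₀ : ↥B × Bool, ((dedge ℓ₀).2.1).2 = ℓ₀.2 := by
        intro ℓ₀
        rcases Bool.eq_false_or_eq_true ℓ₀.2 with h | h
        · rw [hdpos ℓ₀ h, hedpos ℓ₀.1, h]
        · rw [hdneg ℓ₀ h, h]
          have h5 := hedpos ℓ₀.1
          simp [Ltr.inv, h5]
      have hsign' : ℓ'.2 = !ℓ.2 := by
        have h1 := hsign ℓ'
        have h2 := hsign ℓ
        rw [hc] at h1
        simp only [Ltr.inv] at h1
        rw [h2] at h1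
        exact h1.symm
      have hee : ed ℓ'.1 = ed ℓ.1 := by
        rcases Bool.eq_false_or_eq_true ℓ.2 with h | h
        · -- ℓ.2 = true, ℓ'.2 = false
          have h' : ℓ'.2 = false := by rw [hsign', h]; rfl
          rw [hdneg ℓ' h', hdpos ℓ h] at hc
          have h1 := congrArg (fun e : M.Q × Ltr A × M.Q => e.1) hc
          have h2 := congrArg (fun e : M.Q × Ltr A × M.Q => e.2.1) hc
          have h3 := congrArg (fun e : M.Q × Ltr A × M.Q => e.2.2) hc
          simp only at h1 h2 h3
          rw [heta (ed ℓ'.1), heta (ed ℓ.1), h3, h1, Ltr.inv_injective h2]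
        · -- ℓ.2 = false, ℓ'.2 = true
          have h' : ℓ'.2 = true := by rw [hsign', h]; rfl
          rw [hdpos ℓ' h', hdneg ℓ h] at hc
          have h1 := congrArg (fun e : M.Q × Ltr A × M.Q => e.1) hc
          have h2 := congrArg (fun e : M.Q × Ltr A × M.Q => e.2.1) hc
          have h3 := congrArg (fun e : M.Q × Ltr A × M.Q => e.2.2) hc
          simp only [Ltr.inv_inv] at h1 h2 h3
          rw [heta (ed ℓ'.1), heta (ed ℓ.1), h1, h2, h3]
      have hxx : ℓ'.1 = ℓ.1 := by
        have hv1 := hedval ℓ'.1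
        rw [hee, ← hedval ℓ.1] at hv1
        exact Subtype.ext hv1
      rw [heta2 ℓ', hxx, hsign']
    -- main cancellation invariant
    have main : ∀ (L : List (↥B × Bool)) (ℓ : ↥B × Bool), IsReducedWord (L ++ [ℓ]) →
        ∃ v, IsReducedWord (v ++ (dedge ℓ).2.1 :: wordInv (u (dedge ℓ).2.2)) ∧
          FreeGroup.mk (v ++ (dedge ℓ).2.1 :: wordInv (u (dedge ℓ).2.2)) =
            FreeGroup.lift (Subtype.val) (FreeGroup.mk (L ++ [ℓ])) := by
      intro L
      induction L using List.reverseRecOn with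
      | nil =>
        intro ℓ _
        refine ⟨u (dedge ℓ).1, ?_, ?_⟩
        · exact mid_reduced hdet hdual hTE hTinv u hu (hdE ℓ) (hdT ℓ)
        · rw [hdval ℓ]
          rw [List.nil_append, FreeGroup.lift_mk]
          cases ℓ with
          | mk x b => cases b <;> simp
      | append_singleton L ℓ' ih =>
        intro ℓ hred
        have hred' : IsReducedWord (L ++ [ℓ']) := hred.prefix
        obtain ⟨v', hv'red, hv'mk⟩ := ih ℓ' hred'
        have hadj : ¬(ℓ = (ℓ'.1, !ℓ'.2)) := by
          intro hc
          refine hred L [] ℓ'.1 ℓ'.2 ?_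
          rw [hc]
          simp
        have hnd : dedge ℓ ≠ ((dedge ℓ').2.2, Ltr.inv (dedge ℓ').2.1, (dedge ℓ').1) :=
          fun hc => hadj (hddual ℓ' ℓ hc)
        obtain ⟨v, hvred, hvmk⟩ :=
          cancel_step (p₁ := (dedge ℓ').1) (m₁ := (dedge ℓ').2.1) (q₁ := (dedge ℓ').2.2)
            (p₂ := (dedge ℓ).1) (m₂ := (dedge ℓ).2.1) (q₂ := (dedge ℓ).2.2)
            hdet hdual hTE hTinv u hu (hdE ℓ') (hdT ℓ') (hdE ℓ) (hdT ℓ)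
            (fun hc => hnd (by rw [heta (dedge ℓ), hc.1, hc.2.1, hc.2.2])) v' hv'red
        refine ⟨v, hvred, ?_⟩
        rw [hvmk, hv'mk, hdval ℓ]
        rw [show L ++ [ℓ'] ++ [ℓ] = (L ++ [ℓ']) ++ [ℓ] from rfl, ← FreeGroup.mul_mk,
          map_mul, FreeGroup.lift_mk]
        cases ℓ with
        | mk x b => cases b <;> simp [mul_assoc]
    -- kernel is trivial
    rw [injective_iff_map_eq_one]
    intro x hx
    by_contra hxne
    have hL : x.toWord ≠ [] := fun hc => hxne (FreeGroup.toWord_eq_nil_iff.mp hc)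
    have hLred : IsReducedWord x.toWord := by
      have h1 := isReducedWord_reduce (A := ↥B) x.toWord
      rwa [FreeGroup.reduce_toWord] at h1
    obtain ⟨L₀, ℓ, hsplit⟩ := List.eq_nil_or_concat x.toWord |>.resolve_left hL
    rw [List.concat_eq_append] at hsplit
    rw [hsplit] at hLred
    obtain ⟨v, hvred, hvmk⟩ := main L₀ ℓ hLred
    have hone : FreeGroup.mk (v ++ (dedge ℓ).2.1 :: wordInv (u (dedge ℓ).2.2)) = 1 := by
      rw [hvmk, ← hsplit, FreeGroup.mk_toWord, hx]
    exact hvred.mk_ne_one (by simp) hone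
  -- III. counting
  have hcount : B.ncard + Nat.card M.Q = {e ∈ M.E | e.2.1.2 = true}.ncard + 1 := by
    set S : Set (M.Q × Ltr A × M.Q) := {e | e ∈ M.E ∧ e ∉ T ∧ e.2.1.2 = true} with hSdef
    have hSfin : S.Finite := hEfin.subset (fun e he => he.1)
    -- injectivity of the word map on S
    have haux : ∀ (p q p' q' : M.Q) (m m' : Ltr A), (p, m, q) ∈ M.E → (p, m, q) ∉ T →
        (u p).length ≤ (u p').length →
        u p ++ m :: wordInv (u q) = u p' ++ m' :: wordInv (u q') →
        (p, m, q) = ((p', m', q') : M.Q × Ltr A × M.Q) := by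
      intro p q p' q' m m' he hT hle heq
      have htake : u p = (u p').take (u p).length := by
        have h1 := congrArg (List.take (u p).length) heq
        rw [List.take_append_of_le_length (le_refl _),
          List.take_append_of_le_length hle, List.take_length] at h1
        exact h1
      have hsplit : u p' = u p ++ (u p').drop (u p).length := by
        conv_lhs => rw [← List.take_append_drop (u p).length (u p'), ← htake]
      cases hdrop : (u p').drop (u p).length with
      | cons y rest =>
        rw [hdrop] at hsplit
        -- the middle letter must equal y ; branching contradiction
        rw [hsplit, List.append_assoc] at heq
        have h2 := List.append_cancel_left heq.symm
        simp only [List.cons_append, List.cons.injEq] at h2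
        exact absurd (branch_absurd hdet hTE u hu (h2.1 ▸ hsplit) he hT) id
      | nil =>
        rw [hdrop, List.append_nil] at hsplit
        have hpp : p = p' := by
          apply pathOn_det hdet hTE hTE (hupath p)
          rw [← hsplit]; exact hupath p'
        subst hpp
        rw [hsplit] at heq
        have h2 := List.append_cancel_left heq
        simp only [List.cons.injEq] at h2
        have hqq : q = q' := by
          apply pathOn_det hdet hTE hTE (hupath q)
          rw [wordInv_injective h2.2]; exact hupath q'
        rw [h2.1, hqq]
    have hinjOn : Set.InjOn (fun e : M.Q × Ltr A × M.Q =>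
        FreeGroup.mk (u e.1 ++ e.2.1 :: wordInv (u e.2.2))) S := by
      rintro ⟨p, m, q⟩ hem ⟨p', m', q'⟩ he' hval
      simp only at hval
      have hwords : u p ++ m :: wordInv (u q) = u p' ++ m' :: wordInv (u q') := by
        apply IsReducedWord.mk_inj _ _ hval
        · exact mid_reduced hdet hdual hTE hTinv u hu hem.1 hem.2.1
        · exact mid_reduced hdet hdual hTE hTinv u hu he'.1 he'.2.1
      rcases le_total (u p).length (u p').length with hle | hle
      · exact haux p q p' q' m m' hem.1 hem.2.1 hle hwords
      · exact (haux p' q' p q m' m he'.1 he'.2.1 hle hwords.symm).symm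
    have hBcard : B.ncard = S.ncard := by
      rw [hBS]
      exact Set.ncard_image_of_injOn hinjOn
    -- counting tree edges
    letI : Fintype M.Q := Fintype.ofFinite M.Q
    set G : SimpleGraph M.Q := SimpleGraph.fromRel (fun x y => ∃ a, (x, a, y) ∈ T)
      with hGdef
    set Tpos : Set (M.Q × Ltr A × M.Q) := {e | e ∈ T ∧ e.2.1.2 = true} with hTposdef
    have hTposfin : Tpos.Finite := hEfin.subset (fun e he => hTE he.1)
    have hmap : ∀ e ∈ Tpos, s(e.1, e.2.2) ∈ G.edgeSet := by
      rintro ⟨p, m, q⟩ he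
      rw [SimpleGraph.mem_edgeSet, hGdef, SimpleGraph.fromRel_adj]
      exact ⟨tree_edge_ne hTinv hTsimple he.1, Or.inl ⟨m, he.1⟩⟩
    have hinjT : Set.InjOn (fun e : M.Q × Ltr A × M.Q => s(e.1, e.2.2)) Tpos := by
      rintro ⟨p, m, q⟩ he ⟨p', m', q'⟩ he' hval
      simp only [Sym2.eq, Sym2.rel_iff', Prod.mk.injEq, Prod.swap_prod_mk] at hval
      rcases hval with ⟨h1, h2⟩ | ⟨h1, h2⟩
      · subst h1; subst h2
        rw [hTsimple _ _ _ _ he.1 he'.1]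
      · subst h1; subst h2
        exfalso
        have hd := hTinv _ _ _ he'.1
        have := hTsimple _ _ _ _ he.1 hd
        have hsnd := congrArg (fun l : Ltr A => l.2) this
        simp only [Ltr.inv] at hsnd
        rw [he.2, he'.2] at hsnd
        simp at hsnd
    have himg : (fun e : M.Q × Ltr A × M.Q => s(e.1, e.2.2)) '' Tpos = G.edgeSet := by
      apply Set.eq_of_subset_of_subset
      · rintro x ⟨e, he, rfl⟩; exact hmap e he
      · intro x hx
        induction x with
        | _ p q =>
          rw [SimpleGraph.mem_edgeSet, hGdef, SimpleGraph.fromRel_adj] at hx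
          obtain ⟨hne, h | h⟩ := hx
          · obtain ⟨m, hm⟩ := h
            rcases Bool.eq_false_or_eq_true m.2 with hb | hb
            · exact ⟨(p, m, q), ⟨hm, hb⟩, rfl⟩
            · refine ⟨(q, Ltr.inv m, p), ⟨hTinv _ _ _ hm, ?_⟩, Sym2.eq_swap⟩
              simp [Ltr.inv, hb]
          · obtain ⟨m, hm⟩ := h
            rcases Bool.eq_false_or_eq_true m.2 with hb | hb
            · exact ⟨(q, m, p), ⟨hm, hb⟩, Sym2.eq_swap⟩
            · refine ⟨(p, Ltr.inv m, q), ⟨hTinv _ _ _ hm, ?_⟩, rfl⟩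
              simp [Ltr.inv, hb]
    have hTcard : Tpos.ncard = G.edgeSet.ncard := by
      rw [← himg, Set.ncard_image_of_injOn hinjT]
    have hGcard : G.edgeSet.ncard + 1 = Nat.card M.Q := by
      classical
      rw [Set.ncard_eq_toFinset_card', Nat.card_eq_fintype_card]
      have := hTree.card_edgeFinset
      rwa [SimpleGraph.edgeFinset] at this
    -- decompose positive edges
    have hdecomp : {e ∈ M.E | e.2.1.2 = true} = Tpos ∪ S := by
      ext e
      simp only [Set.mem_setOf_eq, Set.mem_union, hTposdef, hSdef]
      constructor
      · rintro ⟨he, hpos⟩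
        by_cases hT : e ∈ T
        · exact Or.inl ⟨hT, hpos⟩
        · exact Or.inr ⟨he, hT, hpos⟩
      · rintro (⟨hT, hpos⟩ | ⟨he, hT, hpos⟩)
        · exact ⟨hTE hT, hpos⟩
        · exact ⟨he, hpos⟩
    have hdisj : Disjoint Tpos S := by
      rw [Set.disjoint_left]
      rintro e ⟨hT, -⟩ ⟨-, hT', -⟩
      exact hT' hT
    have hEcard : {e ∈ M.E | e.2.1.2 = true}.ncard = Tpos.ncard + S.ncard := by
      rw [hdecomp, Set.ncard_union_eq hdisj hTposfin hSfin]
    rw [hEcard, hBcard, ← hGcard, ← hTcard]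
    omega
  exact ⟨⟨hclosure, hfree⟩, hcount⟩
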